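/- arXiv:1212.0417 — 2 statements merged into one kernel-verified Lean document; each statement's English description precedes it below -/
import Mathlib

section
/- Assume A is twice continuously differentiable on ℝⁿ∖{0}. Suppose (λ*, v*) is an eigenpair with ‖v*‖₂ = 1 and J(v*) − σI is invertible. Then ψ is differentiable at v* and its Fréchet derivative is the linear map x ↦ (J(v*) − σI)⁻¹x, i.e. ψ'(v*) = (J(v*) − σI)⁻¹. -/
open Matrix Asymptotics Topology
open scoped RealInnerProductSpace

set_option maxHeartbeats 1000000
set_option synthInstance.maxHeartbeats 400000

noncomputable def mvCLM {ι : Type*} [Fintype ι] [DecidableEq ι] (M : Matrix ι ι ℝ) :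
    EuclideanSpace ℝ ι →L[ℝ] EuclideanSpace ℝ ι :=
  LinearMap.toContinuousLinearMap (Matrix.toEuclideanLin M)

noncomputable def invitPsi {n : ℕ} (J : EuclideanSpace ℝ (Fin n) → Matrix (Fin n) (Fin n) ℝ)
    (σ : ℝ) (v : EuclideanSpace ℝ (Fin n)) : EuclideanSpace ℝ (Fin n) :=
  mvCLM ((J v - σ • 1)⁻¹) v

noncomputable def invitPhi {n : ℕ} (J : EuclideanSpace ℝ (Fin n) → Matrix (Fin n) (Fin n) ℝ)
    (σ : ℝ) (v : EuclideanSpace ℝ (Fin n)) : EuclideanSpace ℝ (Fin n) :=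
  ‖invitPsi J σ v‖⁻¹ • invitPsi J σ v

noncomputable def rayQuot {n : ℕ} (A : EuclideanSpace ℝ (Fin n) → Matrix (Fin n) (Fin n) ℝ)
    (v : EuclideanSpace ℝ (Fin n)) : ℝ :=
  ⟪v, mvCLM (A v) v⟫ / ⟪v, v⟫

/- ### Auxiliary lemmas -/

lemma mvCLM_apply' {ι : Type*} [Fintype ι] [DecidableEq ι] (M : Matrix ι ι ℝ)
    (v : EuclideanSpace ℝ ι) :
    mvCLM M v = (WithLp.equiv 2 _).symm (M.mulVec ((WithLp.equiv 2 _) v)) := by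
  simp [mvCLM, Matrix.toEuclideanLin_apply]

noncomputable def mvRE {ι : Type*} [Fintype ι] [DecidableEq ι] :
    Matrix ι ι ℝ ≃+* (EuclideanSpace ℝ ι →L[ℝ] EuclideanSpace ℝ ι) where
  toFun := mvCLM
  invFun T := Matrix.toEuclideanLin.symm T.toLinearMap
  left_inv M := by simp [mvCLM]
  right_inv T := by
    apply ContinuousLinearMap.coe_injective
    simp [mvCLM]
  map_add' M N := by
    ext v i
    simp only [mvCLM_apply', Matrix.add_mulVec, ContinuousLinearMap.add_apply]
    rfl
  map_mul' M N := by
    ext v i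
    simp [mvCLM_apply', ← Matrix.mulVec_mulVec]

lemma mvRE_apply {ι : Type*} [Fintype ι] [DecidableEq ι] (M : Matrix ι ι ℝ) :
    mvRE M = mvCLM M := rfl

lemma ringEquiv_ring_inverse {R S : Type*} [Ring R] [Ring S] (e : R ≃+* S) (a : R) :
    e (Ring.inverse a) = Ring.inverse (e a) := by
  by_cases h : IsUnit a
  · obtain ⟨u, rfl⟩ := h
    rw [Ring.inverse_unit]
    have : e ↑u = ↑(Units.map e.toRingHom.toMonoidHom u) := rfl
    rw [this, Ring.inverse_unit]
    rfl
  · rw [Ring.inverse_non_unit _ h, Ring.inverse_non_unit, map_zero]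
    intro hu
    exact h (by simpa using hu.map e.symm)

lemma mvCLM_smul_one {ι : Type*} [Fintype ι] [DecidableEq ι] (σ : ℝ) (v : EuclideanSpace ℝ ι) :
    mvCLM (σ • (1 : Matrix ι ι ℝ)) v = σ • v := by
  ext i
  simp [mvCLM_apply', Matrix.smul_mulVec, Matrix.one_mulVec]

/-- If `A` is twice continuously differentiable on `ℝⁿ∖{0}`, `(λ*, v*)`
is an eigenpair with `‖v*‖ = 1` and `J(v*) − σI` is invertible, then `ψ` is differentiable
at `v*` with Fréchet derivative `x ↦ (J(v*) − σI)⁻¹ x`. -/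
theorem stmt7 {n : ℕ} (hn : 1 ≤ n)
    (A J : EuclideanSpace ℝ (Fin n) → Matrix (Fin n) (Fin n) ℝ)
    (hsymm : ∀ v : EuclideanSpace ℝ (Fin n), v ≠ 0 → (A v).IsSymm)
    (hsmooth : ContDiffOn ℝ 2 (fun w i j => A w i j) {(0 : EuclideanSpace ℝ (Fin n))}ᶜ)
    (hscale : ∀ α : ℝ, α ≠ 0 → ∀ v : EuclideanSpace ℝ (Fin n), v ≠ 0 → A (α • v) = A v)
    (hJ : ∀ v : EuclideanSpace ℝ (Fin n), v ≠ 0 →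
      HasFDerivAt (fun w => mvCLM (A w) w) (mvCLM (J v)) v)
    (lam σ : ℝ) (vstar : EuclideanSpace ℝ (Fin n)) (hnorm : ‖vstar‖ = 1)
    (heig : mvCLM (A vstar) vstar = lam • vstar)
    (hinv : IsUnit (J vstar - σ • (1 : Matrix (Fin n) (Fin n) ℝ))) :
    HasFDerivAt (invitPsi J σ) (mvCLM ((J vstar - σ • 1)⁻¹)) vstar := by
  have hv0 : vstar ≠ 0 := by
    intro h; rw [h, norm_zero] at hnorm; norm_num at hnorm
  set U : Set (EuclideanSpace ℝ (Fin n)) := {(0 : EuclideanSpace ℝ (Fin n))}ᶜ with hU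
  have hUopen : IsOpen U := isOpen_compl_singleton
  have hUmem : U ∈ 𝓝 vstar := hUopen.mem_nhds hv0
  set F : EuclideanSpace ℝ (Fin n) → EuclideanSpace ℝ (Fin n) := fun w => mvCLM (A w) w with hF
  -- homogeneity of F
  have hhom : ∀ (α : ℝ), α ≠ 0 → ∀ v, v ≠ 0 → F (α • v) = α • F v := by
    intro α hα v hv
    simp only [hF, hscale α hα v hv, (mvCLM (A v)).map_smul]
  -- Euler identity
  have heuler : ∀ v, v ≠ 0 → mvCLM (J v) v = F v := by
    intro v hv
    have h1 : HasDerivAt (fun t : ℝ => t • v) v 1 := by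
      simpa using (hasDerivAt_id (1 : ℝ)).smul_const v
    have h2 : HasFDerivAt F (mvCLM (J v)) ((1 : ℝ) • v) := by
      rw [one_smul]; exact hJ v hv
    have hcomp : HasDerivAt (fun t : ℝ => F (t • v)) (mvCLM (J v) v) 1 :=
      HasFDerivAt.comp_hasDerivAt (f := fun t : ℝ => t • v) 1 h2 h1
    have h4 : HasDerivAt (fun t : ℝ => t • F v) (F v) 1 := by
      simpa using (hasDerivAt_id (1 : ℝ)).smul_const (F v)
    have h3 : HasDerivAt (fun t : ℝ => F (t • v)) (F v) 1 := by
      apply h4.congr_of_eventuallyEq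
      have hne : {t : ℝ | t ≠ 0} ∈ 𝓝 (1 : ℝ) :=
        isOpen_compl_singleton.mem_nhds (by norm_num)
      filter_upwards [hne] with t ht
      exact hhom t ht v hv
    exact hcomp.unique h3
  -- F is C² on U
  have hF2 : ContDiffOn ℝ 2 F U := by
    have hG : ContDiffOn ℝ 2
        (fun w : EuclideanSpace ℝ (Fin n) => (fun i => ∑ j, A w i j * w j : Fin n → ℝ)) U := by
      rw [contDiffOn_pi]
      intro i
      apply ContDiffOn.sum
      intro j _
      have hA : ContDiffOn ℝ 2 (fun w => A w i j) U :=
        contDiffOn_pi.mp (contDiffOn_pi.mp hsmooth i) j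
      exact hA.mul ((EuclideanSpace.proj j :
        EuclideanSpace ℝ (Fin n) →L[ℝ] ℝ).contDiff.contDiffOn)
    have hFeq : F = (fun p : Fin n → ℝ => (EuclideanSpace.equiv (Fin n) ℝ).symm p) ∘
        (fun w : EuclideanSpace ℝ (Fin n) => (fun i => ∑ j, A w i j * w j : Fin n → ℝ)) := by
      funext w
      simp only [Function.comp_apply, hF, mvCLM_apply']
      rfl
    rw [hFeq]
    exact (EuclideanSpace.equiv (Fin n) ℝ).symm.contDiff.comp_contDiffOn hG
  -- second derivative B
  have hJeq : ∀ᶠ v in 𝓝 vstar, fderiv ℝ F v = mvCLM (J v) := by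
    filter_upwards [hUmem] with v hv
    exact (hJ v hv).fderiv
  have hCA : ContDiffAt ℝ 2 F vstar := hF2.contDiffAt hUmem
  have hd : DifferentiableAt ℝ (fderiv ℝ F) vstar :=
    (hCA.fderiv_right (m := 1) (by norm_num)).differentiableAt one_ne_zero
  set B := fderiv ℝ (fderiv ℝ F) vstar with hBdef
  have hB : HasFDerivAt (fun v => mvCLM (J v)) B vstar := by
    apply hd.hasFDerivAt.congr_of_eventuallyEq
    filter_upwards [hJeq] with v h
    exact h.symm
  -- B annihilates vstar
  have hBv : ∀ x, B x vstar = 0 := by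
    have h1 := hB.clm_apply (hasFDerivAt_id vstar)
    have h2 : HasFDerivAt (fun v => mvCLM (J v) v) (mvCLM (J vstar)) vstar := by
      apply (hJ vstar hv0).congr_of_eventuallyEq
      filter_upwards [hUmem] with v hv
      exact heuler v hv
    have h3 := h1.unique h2
    intro x
    have h4 := DFunLike.congr_fun h3 x
    simp only [ContinuousLinearMap.add_apply, ContinuousLinearMap.comp_apply,
      ContinuousLinearMap.coe_id', id_eq, ContinuousLinearMap.flip_apply] at h4
    exact add_eq_left.mp h4
  -- the map g and its derivative
  set g : EuclideanSpace ℝ (Fin n) → (EuclideanSpace ℝ (Fin n) →L[ℝ] EuclideanSpace ℝ (Fin n)) :=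
    fun v => mvCLM (J v - σ • 1) with hgdef
  have hgeq : ∀ v, g v = mvCLM (J v) - mvCLM (σ • (1 : Matrix (Fin n) (Fin n) ℝ)) := fun v =>
    map_sub (mvRE (ι := Fin n)) (J v) (σ • 1)
  have hg : HasFDerivAt g B vstar := by
    have h := hB.sub_const (mvCLM (σ • (1 : Matrix (Fin n) (Fin n) ℝ)))
    apply h.congr_of_eventuallyEq
    exact Filter.Eventually.of_forall hgeq
  have hunit : IsUnit (g vstar) := hinv.map (mvRE (ι := Fin n))
  obtain ⟨u, hu⟩ := hunit
  have h := hasFDerivAt_ringInverse (𝕜 := ℝ) u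
  rw [hu] at h
  have hinvg := h.comp vstar hg
  have hpsi_eq : invitPsi J σ = fun v => (Ring.inverse (g v)) v := by
    funext v
    rw [invitPsi, Matrix.nonsing_inv_eq_ringInverse]
    have h : mvCLM (Ring.inverse (J v - σ • 1)) = Ring.inverse (g v) := by
      rw [← mvRE_apply, ringEquiv_ring_inverse]
      rfl
    rw [h]
  -- value computations
  have hgv : g vstar vstar = (lam - σ) • vstar := by
    rw [hgeq, ContinuousLinearMap.sub_apply, mvCLM_smul_one, heuler vstar hv0]
    simp only [hF]
    rw [heig, sub_smul]
  have happ : (↑u⁻¹ : EuclideanSpace ℝ (Fin n) →L[ℝ] EuclideanSpace ℝ (Fin n))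
      (g vstar vstar) = vstar := by
    have h2 : ((↑u⁻¹ * ↑u : EuclideanSpace ℝ (Fin n) →L[ℝ] EuclideanSpace ℝ (Fin n))) vstar
        = vstar := by
      rw [u.inv_mul]; rfl
    rw [← hu]
    rw [ContinuousLinearMap.mul_apply] at h2
    exact h2
  have hls : lam - σ ≠ 0 := by
    intro h0
    rw [hgv, h0, zero_smul, map_zero] at happ
    exact hv0 happ.symm
  have huinv : (↑u⁻¹ : EuclideanSpace ℝ (Fin n) →L[ℝ] EuclideanSpace ℝ (Fin n)) vstar
      = (lam - σ)⁻¹ • vstar := by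
    rw [hgv, ContinuousLinearMap.map_smul] at happ
    exact ((inv_smul_eq_iff₀ hls).mpr happ.symm).symm
  -- conclude
  rw [hpsi_eq]
  have hmain := hinvg.clm_apply (hasFDerivAt_id vstar)
  convert hmain using 1
  iterate 7 rfl
  symm
  have h1 : Ring.inverse (g vstar) = mvCLM ((J vstar - σ • 1)⁻¹) := by
    rw [Matrix.nonsing_inv_eq_ringInverse, ← mvRE_apply, ringEquiv_ring_inverse]
    rfl
  refine ContinuousLinearMap.ext fun x => ?_
  simp only [Function.comp_apply, ContinuousLinearMap.add_apply,
    ContinuousLinearMap.comp_apply, ContinuousLinearMap.coe_id', id_eq,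
    ContinuousLinearMap.flip_apply, ContinuousLinearMap.neg_apply,
    ContinuousLinearMap.mulLeftRight_apply, ContinuousLinearMap.mul_apply]
  rw [h1, huinv, (B x).map_smul, hBv, smul_zero,
    (↑u⁻¹ : EuclideanSpace ℝ (Fin n) →L[ℝ] EuclideanSpace ℝ (Fin n)).map_zero,
    neg_zero, add_zero]
end

section
/- Assume A is twice continuously differentiable on ℝⁿ∖{0}. Suppose (λ*, v*) is an eigenpair with ‖v*‖₂ = 1, σ ≠ λ*, and J(v*) − σI is invertible. Then φ is differentiable at v* and its Fréchet derivative is given by the matrix φ'(v*) = |λ* − σ| (I − v*v*ᵀ)(J(v*) − σI)⁻¹. -/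
open Matrix Asymptotics Topology
open scoped RealInnerProductSpace

section AuxMv

variable {ι : Type*} [Fintype ι] [DecidableEq ι]

lemma mvCLM_apply_coord (M : Matrix ι ι ℝ) (x : EuclideanSpace ℝ ι) (i : ι) :
    mvCLM M x i = ∑ j, M i j * x j := by
  simp [mvCLM, Matrix.toEuclideanLin_apply, Matrix.mulVec, dotProduct]

lemma mvCLM_mul (M N : Matrix ι ι ℝ) : mvCLM (M * N) = (mvCLM M).comp (mvCLM N) := by
  ext x
  simp only [mvCLM, ContinuousLinearMap.comp_apply, LinearMap.coe_toContinuousLinearMap',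
    Matrix.toEuclideanLin_apply]
  simp [Matrix.mulVec_mulVec]

lemma mvCLM_one : mvCLM (1 : Matrix ι ι ℝ) = ContinuousLinearMap.id ℝ _ := by
  ext x i
  simp [mvCLM_apply_coord, Matrix.one_apply, Finset.sum_ite_eq]

lemma mvCLM_smul (c : ℝ) (M : Matrix ι ι ℝ) : mvCLM (c • M) = c • mvCLM M := by
  simp only [mvCLM, _root_.map_smul]

lemma mvCLM_sub (M N : Matrix ι ι ℝ) : mvCLM (M - N) = mvCLM M - mvCLM N := by
  simp only [mvCLM, map_sub]

lemma mvCLM_vecMulVec (w u x : EuclideanSpace ℝ ι) :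
    mvCLM (Matrix.vecMulVec w u) x = ⟪u, x⟫ • w := by
  ext i
  simp only [mvCLM_apply_coord, Matrix.vecMulVec_apply, PiLp.smul_apply, smul_eq_mul]
  rw [PiLp.inner_apply]
  simp only [RCLike.inner_apply, conj_trivial]
  rw [Finset.sum_mul]
  exact Finset.sum_congr rfl fun j _ => by ring

end AuxMv

section AuxAnalysis

variable {F : Type*} [NormedAddCommGroup F] [InnerProductSpace ℝ F]

lemma hasFDerivAt_norm_of_ne {x : F} (hx : x ≠ 0) :
    HasFDerivAt (fun y : F => ‖y‖) (innerSL ℝ (‖x‖⁻¹ • x)) x := by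
  have h0 : ⟪x, x⟫ ≠ 0 := fun h => hx ((inner_self_eq_zero (𝕜 := ℝ)).mp h)
  have h1 : HasFDerivAt (fun y : F => ⟪y, y⟫)
      ((fderivInnerCLM ℝ (x, x)).comp ((ContinuousLinearMap.id ℝ F).prod
        (ContinuousLinearMap.id ℝ F))) x :=
    (hasFDerivAt_id x).inner ℝ (hasFDerivAt_id x)
  have h2 := h1.sqrt h0
  have hfun : (fun y : F => Real.sqrt ⟪y, y⟫) = fun y : F => ‖y‖ := by
    funext y
    rw [real_inner_self_eq_norm_mul_norm, Real.sqrt_mul_self (norm_nonneg y)]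
  rw [hfun] at h2
  convert h2 using 1
  ext y
  have hs : Real.sqrt ⟪x, x⟫ = ‖x‖ := by
    rw [real_inner_self_eq_norm_mul_norm, Real.sqrt_mul_self (norm_nonneg x)]
  simp only [innerSL_apply_apply, ContinuousLinearMap.smul_apply, ContinuousLinearMap.comp_apply,
    ContinuousLinearMap.prod_apply, ContinuousLinearMap.id_apply, fderivInnerCLM_apply, hs,
    real_inner_smul_left, smul_eq_mul]
  rw [real_inner_comm y x]
  have hxn : ‖x‖ ≠ 0 := norm_ne_zero_iff.mpr hx
  field_simp
  ring

variable {X G H W : Type*} [NormedAddCommGroup X] [NormedSpace ℝ X]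
  [NormedAddCommGroup G] [NormedSpace ℝ G] [NormedAddCommGroup H] [NormedSpace ℝ H]
  [NormedAddCommGroup W]

omit [NormedAddCommGroup F] [InnerProductSpace ℝ F] in
lemma clm_apply_isLittleO {Q : X → G →L[ℝ] H} {x₀ : X} {g : X → G} {k : X → W}
    (hQ : ContinuousAt Q x₀) (hg : g =o[𝓝 x₀] k) :
    (fun v => Q v (g v)) =o[𝓝 x₀] k := by
  have hb : (fun v => Q v (g v)) =O[𝓝 x₀] g := by
    rw [Asymptotics.isBigO_iff]
    refine ⟨‖Q x₀‖ + 1, ?_⟩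
    have h1 : ∀ᶠ v in 𝓝 x₀, ‖Q v‖ < ‖Q x₀‖ + 1 :=
      (hQ.norm : Filter.Tendsto _ _ _).eventually_lt_const (lt_add_one _)
    filter_upwards [h1] with v hv
    calc ‖Q v (g v)‖ ≤ ‖Q v‖ * ‖g v‖ := (Q v).le_opNorm _
      _ ≤ (‖Q x₀‖ + 1) * ‖g v‖ := mul_le_mul_of_nonneg_right hv.le (norm_nonneg _)
  exact hb.trans_isLittleO hg

omit [NormedAddCommGroup F] [InnerProductSpace ℝ F] in
lemma small_factor_isLittleO {Jc : X → X →L[ℝ] G} {x₀ : X} (L : X →L[ℝ] X)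
    (hJ : ContinuousAt Jc x₀) :
    (fun v => (Jc v - Jc x₀) (L (v - x₀))) =o[𝓝 x₀] (fun v => v - x₀) := by
  rw [Asymptotics.isLittleO_iff]
  intro c hc
  have hLpos : (0:ℝ) < ‖L‖ + 1 := by positivity
  have hpos : 0 < c / (‖L‖ + 1) := div_pos hc hLpos
  have ht : Filter.Tendsto (fun v => ‖Jc v - Jc x₀‖) (𝓝 x₀) (𝓝 0) := by
    have ht' : ContinuousAt (fun v => Jc v - Jc x₀) x₀ := hJ.sub continuousAt_const
    have h := ht'.norm
    rw [ContinuousAt] at h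
    simpa using h
  have h1 : ∀ᶠ v in 𝓝 x₀, ‖Jc v - Jc x₀‖ < c / (‖L‖ + 1) := ht.eventually_lt_const hpos
  filter_upwards [h1] with v hv
  calc ‖(Jc v - Jc x₀) (L (v - x₀))‖ ≤ ‖Jc v - Jc x₀‖ * ‖L (v - x₀)‖ :=
        (Jc v - Jc x₀).le_opNorm _
    _ ≤ (c / (‖L‖ + 1)) * ((‖L‖ + 1) * ‖v - x₀‖) := by
        apply mul_le_mul hv.le ?_ (norm_nonneg _) hpos.le
        calc ‖L (v - x₀)‖ ≤ ‖L‖ * ‖v - x₀‖ := L.le_opNorm _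
          _ ≤ (‖L‖ + 1) * ‖v - x₀‖ := by nlinarith [norm_nonneg (v - x₀)]
    _ = c * ‖v - x₀‖ := by field_simp

end AuxAnalysis

set_option maxHeartbeats 1000000

/-- If `A` is twice continuously differentiable on `ℝⁿ∖{0}`, `(λ*, v*)`
is an eigenpair with `‖v*‖ = 1`, `σ ≠ λ*`, and `J(v*) − σI` is invertible, then `φ` is
differentiable at `v*` with derivative `|λ* − σ| (I − v*v*ᵀ)(J(v*) − σI)⁻¹`. -/
theorem stmt8 {n : ℕ} (hn : 1 ≤ n)
    (A J : EuclideanSpace ℝ (Fin n) → Matrix (Fin n) (Fin n) ℝ)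
    (hsymm : ∀ v : EuclideanSpace ℝ (Fin n), v ≠ 0 → (A v).IsSymm)
    (hsmooth : ContDiffOn ℝ 2 (fun w i j => A w i j) {(0 : EuclideanSpace ℝ (Fin n))}ᶜ)
    (hscale : ∀ α : ℝ, α ≠ 0 → ∀ v : EuclideanSpace ℝ (Fin n), v ≠ 0 → A (α • v) = A v)
    (hJ : ∀ v : EuclideanSpace ℝ (Fin n), v ≠ 0 →
      HasFDerivAt (fun w => mvCLM (A w) w) (mvCLM (J v)) v)
    (lam σ : ℝ) (vstar : EuclideanSpace ℝ (Fin n)) (hnorm : ‖vstar‖ = 1)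
    (heig : mvCLM (A vstar) vstar = lam • vstar) (hσ : σ ≠ lam)
    (hinv : IsUnit (J vstar - σ • (1 : Matrix (Fin n) (Fin n) ℝ))) :
    HasFDerivAt (invitPhi J σ)
      (mvCLM (|lam - σ| •
        ((1 - Matrix.vecMulVec vstar vstar) * (J vstar - σ • 1)⁻¹))) vstar := by
  have hv0 : vstar ≠ 0 := by
    intro h
    rw [h, norm_zero] at hnorm
    norm_num at hnorm
  have hc : lam - σ ≠ 0 := sub_ne_zero.mpr (Ne.symm hσ)
  set c : ℝ := lam - σ with hcdef
  -- f is C¹ on {0}ᶜ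
  have hAij : ∀ i j, ContDiffOn ℝ 2 (fun w => A w i j)
      {(0 : EuclideanSpace ℝ (Fin n))}ᶜ := by
    intro i j
    exact contDiffOn_pi.mp (contDiffOn_pi.mp hsmooth i) j
  have hgcd : ContDiffOn ℝ 1 (fun w : EuclideanSpace ℝ (Fin n) => mvCLM (A w) w)
      {(0 : EuclideanSpace ℝ (Fin n))}ᶜ := by
    have h2 : ContDiffOn ℝ 1
        (fun w : EuclideanSpace ℝ (Fin n) => (fun i => ∑ j, A w i j * w j : Fin n → ℝ))
        {(0 : EuclideanSpace ℝ (Fin n))}ᶜ := by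
      rw [contDiffOn_pi]
      intro i
      apply ContDiffOn.sum
      intro j _
      exact ((hAij i j).of_le one_le_two).mul
        ((EuclideanSpace.proj j : EuclideanSpace ℝ (Fin n) →L[ℝ] ℝ).contDiff.contDiffOn)
    have heq : (fun w : EuclideanSpace ℝ (Fin n) => mvCLM (A w) w) =
        fun w => (EuclideanSpace.equiv (Fin n) ℝ).symm (fun i => ∑ j, A w i j * w j) := by
      funext w
      ext i
      simp [mvCLM_apply_coord, EuclideanSpace.equiv]
    rw [heq]
    exact ((EuclideanSpace.equiv (Fin n) ℝ).symm.contDiff).comp_contDiffOn h2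
  have hmem : {(0 : EuclideanSpace ℝ (Fin n))}ᶜ ∈ 𝓝 vstar :=
    isOpen_compl_singleton.mem_nhds hv0
  -- continuity of Jc := mvCLM ∘ J at vstar
  have hJcont : ContinuousAt (fun v => mvCLM (J v)) vstar := by
    have h3 := hgcd.continuousOn_fderiv_of_isOpen isOpen_compl_singleton le_rfl
    have h4 : ContinuousAt (fderiv ℝ (fun w => mvCLM (A w) w)) vstar :=
      h3.continuousAt hmem
    apply h4.congr
    filter_upwards [hmem] with v hv
    exact (hJ v hv).fderiv
  -- matrix-level continuity
  have hdet0 : (J vstar - σ • (1 : Matrix (Fin n) (Fin n) ℝ)).det ≠ 0 :=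
    isUnit_iff_ne_zero.mp ((Matrix.isUnit_iff_isUnit_det _).mp hinv)
  let e : Matrix (Fin n) (Fin n) ℝ ≃ₗ[ℝ]
      (EuclideanSpace ℝ (Fin n) →L[ℝ] EuclideanSpace ℝ (Fin n)) :=
    Matrix.toEuclideanLin.trans LinearMap.toContinuousLinearMap
  have he : ∀ M : Matrix (Fin n) (Fin n) ℝ, e M = mvCLM M := fun _ => rfl
  have hJmat : ContinuousAt J vstar := by
    have hs : Continuous (⇑(e.symm)) := by
      rw [← LinearEquiv.coe_toContinuousLinearEquiv_symm']
      exact e.toContinuousLinearEquiv.symm.continuous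
    have hJe : J = fun v => e.symm (mvCLM (J v)) := by
      funext v
      rw [← he, LinearEquiv.symm_apply_apply]
    rw [hJe]
    exact hs.continuousAt.comp hJcont
  have hMcont : ContinuousAt
      (fun v : EuclideanSpace ℝ (Fin n) => J v - σ • (1 : Matrix (Fin n) (Fin n) ℝ)) vstar :=
    hJmat.sub continuousAt_const
  have hQmat : ContinuousAt
      (fun v : EuclideanSpace ℝ (Fin n) => (J v - σ • (1 : Matrix (Fin n) (Fin n) ℝ))⁻¹)
      vstar := by
    have hRi : ContinuousAt (Ring.inverse : ℝ → ℝ)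
        ((J vstar - σ • (1 : Matrix (Fin n) (Fin n) ℝ)).det) := by
      have hri : (Ring.inverse : ℝ → ℝ) = fun x : ℝ => x⁻¹ := by
        funext x
        exact Ring.inverse_eq_inv x
      rw [hri]
      exact continuousAt_inv₀ hdet0
    exact ContinuousAt.comp (g := Inv.inv)
      (f := fun v : EuclideanSpace ℝ (Fin n) => J v - σ • (1 : Matrix (Fin n) (Fin n) ℝ))
      (continuousAt_matrix_inv _ hRi) hMcont
  have hQcont : ContinuousAt (fun v : EuclideanSpace ℝ (Fin n) => mvCLM ((J v - σ • (1 : Matrix (Fin n) (Fin n) ℝ))⁻¹)) vstar := by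
    have hecont : Continuous (⇑e) := by
      rw [← LinearEquiv.coe_toContinuousLinearEquiv']
      exact e.toContinuousLinearEquiv.continuous
    have hqe : (fun v : EuclideanSpace ℝ (Fin n) =>
        mvCLM ((J v - σ • (1 : Matrix (Fin n) (Fin n) ℝ))⁻¹)) =
        fun v => e ((J v - σ • (1 : Matrix (Fin n) (Fin n) ℝ))⁻¹) := by
      funext v
      rw [he]
    rw [hqe]
    exact hecont.continuousAt.comp hQmat
  have hUnit : ∀ᶠ v in 𝓝 vstar, IsUnit (J v - σ • (1 : Matrix (Fin n) (Fin n) ℝ)) := by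
    have hdetc : ContinuousAt
        (fun v : EuclideanSpace ℝ (Fin n) =>
          (J v - σ • (1 : Matrix (Fin n) (Fin n) ℝ)).det) vstar :=
      (continuous_id.matrix_det.continuousAt).comp hMcont
    filter_upwards [hdetc.eventually_ne hdet0] with v hv using
      (Matrix.isUnit_iff_isUnit_det _).mpr (isUnit_iff_ne_zero.mpr hv)
  -- Euler identity
  have euler : ∀ v : EuclideanSpace ℝ (Fin n), v ≠ 0 →
      mvCLM (J v) v = mvCLM (A v) v := by
    intro v hv
    have hd1 : HasDerivAt (fun α : ℝ => α • v) v 1 := by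
      simpa using (hasDerivAt_id (1:ℝ)).smul_const v
    have hf1 : HasFDerivAt (fun w => mvCLM (A w) w) (mvCLM (J v)) ((fun α : ℝ => α • v) 1) := by
      simp only [one_smul]
      exact hJ v hv
    have h2 : HasDerivAt (fun α : ℝ => mvCLM (A (α • v)) (α • v)) (mvCLM (J v) v) 1 :=
      by have h := hf1.comp_hasDerivAt 1 hd1; exact h
    have h3 : (fun α : ℝ => mvCLM (A (α • v)) (α • v)) =ᶠ[𝓝 (1:ℝ)]
        (fun α => α • mvCLM (A v) v) := by
      filter_upwards [eventually_ne_nhds one_ne_zero] with α hα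
      rw [hscale α hα v hv, _root_.map_smul]
    have h4 : HasDerivAt (fun α : ℝ => α • mvCLM (A v) v) (mvCLM (J v) v) 1 :=
      h2.congr_of_eventuallyEq h3.symm
    have h5 : HasDerivAt (fun α : ℝ => α • mvCLM (A v) v) (mvCLM (A v) v) 1 := by
      simpa using (hasDerivAt_id (1:ℝ)).smul_const (mvCLM (A v) v)
    exact h4.unique h5
  -- algebra with the inverse
  have hQL : ∀ v : EuclideanSpace ℝ (Fin n), IsUnit (J v - σ • (1 : Matrix (Fin n) (Fin n) ℝ)) →
      ∀ x, mvCLM ((J v - σ • 1)⁻¹) (mvCLM (J v - σ • 1) x) = x := by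
    intro v hu x
    have hdet : IsUnit (J v - σ • (1 : Matrix (Fin n) (Fin n) ℝ)).det :=
      (Matrix.isUnit_iff_isUnit_det _).mp hu
    rw [← ContinuousLinearMap.comp_apply, ← mvCLM_mul, Matrix.nonsing_inv_mul _ hdet,
      mvCLM_one, ContinuousLinearMap.id_apply]
  have hLQ : ∀ v : EuclideanSpace ℝ (Fin n), IsUnit (J v - σ • (1 : Matrix (Fin n) (Fin n) ℝ)) →
      ∀ x, mvCLM (J v - σ • 1) (mvCLM ((J v - σ • 1)⁻¹) x) = x := by
    intro v hu x
    have hdet : IsUnit (J v - σ • (1 : Matrix (Fin n) (Fin n) ℝ)).det :=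
      (Matrix.isUnit_iff_isUnit_det _).mp hu
    rw [← ContinuousLinearMap.comp_apply, ← mvCLM_mul, Matrix.mul_nonsing_inv _ hdet,
      mvCLM_one, ContinuousLinearMap.id_apply]
  have hLapp : ∀ (v : EuclideanSpace ℝ (Fin n)) (x : EuclideanSpace ℝ (Fin n)),
      mvCLM (J v - σ • 1) x = mvCLM (J v) x - σ • x := by
    intro v x
    rw [mvCLM_sub, ContinuousLinearMap.sub_apply, mvCLM_smul, ContinuousLinearMap.smul_apply,
      mvCLM_one, ContinuousLinearMap.id_apply]
  set P : EuclideanSpace ℝ (Fin n) →L[ℝ] EuclideanSpace ℝ (Fin n) :=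
    mvCLM ((J vstar - σ • 1)⁻¹) with hPdef
  have hPv : P vstar = c⁻¹ • vstar := by
    have hMv : mvCLM (J vstar - σ • 1) vstar = c • vstar := by
      rw [hLapp, euler vstar hv0, heig, hcdef, sub_smul]
    have h1 := hQL vstar hinv vstar
    rw [hMv, _root_.map_smul] at h1
    have h2 := congrArg (fun y : EuclideanSpace ℝ (Fin n) => c⁻¹ • y) h1
    simpa [smul_smul, inv_mul_cancel₀ hc] using h2
  -- ψ has derivative P at vstar
  have hψ : HasFDerivAt (invitPsi J σ) P vstar := by
    rw [hasFDerivAt_iff_isLittleO]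
    have hne0 : ∀ᶠ v in 𝓝 vstar, v ≠ (0 : EuclideanSpace ℝ (Fin n)) :=
      eventually_ne_nhds hv0
    have o1 : (fun v => mvCLM (A v) v - mvCLM (A vstar) vstar - mvCLM (J vstar) (v - vstar))
        =o[𝓝 vstar] (fun v => v - vstar) := (hJ vstar hv0).isLittleO
    have o2 : (fun v => (mvCLM (J v) - mvCLM (J vstar))
          ((ContinuousLinearMap.id ℝ (EuclideanSpace ℝ (Fin n))) (v - vstar)))
        =o[𝓝 vstar] (fun v => v - vstar) :=
      small_factor_isLittleO (ContinuousLinearMap.id ℝ (EuclideanSpace ℝ (Fin n))) hJcont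
    have core : (fun v => mvCLM (J vstar) vstar - mvCLM (J v) vstar)
        =o[𝓝 vstar] (fun v => v - vstar) := by
      have heq : (fun v => mvCLM (J vstar) vstar - mvCLM (J v) vstar) =ᶠ[𝓝 vstar]
          (fun v => -(mvCLM (A v) v - mvCLM (A vstar) vstar - mvCLM (J vstar) (v - vstar))
            + (mvCLM (J v) - mvCLM (J vstar))
              ((ContinuousLinearMap.id ℝ (EuclideanSpace ℝ (Fin n))) (v - vstar))) := by
        filter_upwards [hne0] with v hv
        have e1 := euler v hv
        have e2 := euler vstar hv0
        simp only [ContinuousLinearMap.sub_apply, ContinuousLinearMap.id_apply, map_sub]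
        rw [e1, e2]
        abel
      exact (o1.neg_left.add o2).congr' heq.symm Filter.EventuallyEq.rfl
    have g1 : (fun v => c⁻¹ • (mvCLM ((J v - σ • (1 : Matrix (Fin n) (Fin n) ℝ))⁻¹)
          (mvCLM (J vstar) vstar - mvCLM (J v) vstar)))
        =o[𝓝 vstar] (fun v => v - vstar) :=
      (clm_apply_isLittleO hQcont core).const_smul_left c⁻¹
    have o3 : (fun v => (mvCLM (J v) - mvCLM (J vstar)) (P (v - vstar)))
        =o[𝓝 vstar] (fun v => v - vstar) := small_factor_isLittleO P hJcont
    have o3' : (fun v => (mvCLM (J vstar) - mvCLM (J v)) (P (v - vstar)))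
        =o[𝓝 vstar] (fun v => v - vstar) := by
      refine o3.neg_left.congr' (Filter.Eventually.of_forall fun v => ?_)
        Filter.EventuallyEq.rfl
      simp [ContinuousLinearMap.sub_apply]
    have g2 : (fun v => mvCLM ((J v - σ • (1 : Matrix (Fin n) (Fin n) ℝ))⁻¹)
          ((mvCLM (J vstar) - mvCLM (J v)) (P (v - vstar))))
        =o[𝓝 vstar] (fun v => v - vstar) := clm_apply_isLittleO hQcont o3'
    have htotal : (fun v => invitPsi J σ v - invitPsi J σ vstar - P (v - vstar)) =ᶠ[𝓝 vstar]
        (fun v => c⁻¹ • (mvCLM ((J v - σ • (1 : Matrix (Fin n) (Fin n) ℝ))⁻¹)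
            (mvCLM (J vstar) vstar - mvCLM (J v) vstar))
          + mvCLM ((J v - σ • (1 : Matrix (Fin n) (Fin n) ℝ))⁻¹)
            ((mvCLM (J vstar) - mvCLM (J v)) (P (v - vstar)))) := by
      filter_upwards [hUnit] with v hu
      have hLQv := hLQ vstar hinv v
      have hsplit : P v = c⁻¹ • vstar + P (v - vstar) := by
        rw [← hPv, ← map_add]
        congr 1
        abel
      calc invitPsi J σ v - invitPsi J σ vstar - P (v - vstar)
          = mvCLM ((J v - σ • (1 : Matrix (Fin n) (Fin n) ℝ))⁻¹) v - P v := by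
            show mvCLM ((J v - σ • (1 : Matrix (Fin n) (Fin n) ℝ))⁻¹) v - P vstar
                - P (v - vstar) = _
            rw [sub_sub, ← map_add]
            congr 2
            abel
        _ = mvCLM ((J v - σ • (1 : Matrix (Fin n) (Fin n) ℝ))⁻¹)
              (v - mvCLM (J v - σ • 1) (P v)) := by
            rw [map_sub, hQL v hu (P v)]
        _ = mvCLM ((J v - σ • (1 : Matrix (Fin n) (Fin n) ℝ))⁻¹)
              (mvCLM (J vstar - σ • 1) (P v) - mvCLM (J v - σ • 1) (P v)) := by
            rw [hLQv]
        _ = mvCLM ((J v - σ • (1 : Matrix (Fin n) (Fin n) ℝ))⁻¹)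
              (mvCLM (J vstar) (P v) - mvCLM (J v) (P v)) := by
            rw [hLapp vstar, hLapp v]
            congr 1
            abel
        _ = c⁻¹ • (mvCLM ((J v - σ • (1 : Matrix (Fin n) (Fin n) ℝ))⁻¹)
              (mvCLM (J vstar) vstar - mvCLM (J v) vstar))
            + mvCLM ((J v - σ • (1 : Matrix (Fin n) (Fin n) ℝ))⁻¹)
              ((mvCLM (J vstar) - mvCLM (J v)) (P (v - vstar))) := by
            rw [hsplit]
            simp only [map_add, _root_.map_smul, map_sub, ContinuousLinearMap.sub_apply,
              smul_sub]
            abel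
    exact ((g1.add g2).congr' htotal.symm Filter.EventuallyEq.rfl)
  -- assemble φ
  have hx0 : invitPsi J σ vstar = c⁻¹ • vstar := hPv
  have hx0ne : invitPsi J σ vstar ≠ 0 := by
    rw [hx0]
    exact smul_ne_zero (inv_ne_zero hc) hv0
  have hnx0 : ‖invitPsi J σ vstar‖ = |c|⁻¹ := by
    rw [hx0, norm_smul, hnorm, mul_one, Real.norm_eq_abs, abs_inv]
  have hnorm_d : HasFDerivAt (fun v => ‖invitPsi J σ v‖)
      ((innerSL ℝ (‖invitPsi J σ vstar‖⁻¹ • invitPsi J σ vstar)).comp P) vstar := by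
    have h6 := (hasFDerivAt_norm_of_ne hx0ne).comp vstar hψ
    simpa [Function.comp_def] using h6
  have habs : |c| ≠ 0 := abs_ne_zero.mpr hc
  have hinv_d : HasFDerivAt (fun v => ‖invitPsi J σ v‖⁻¹)
      ((-(‖invitPsi J σ vstar‖ ^ 2)⁻¹) •
        ((innerSL ℝ (‖invitPsi J σ vstar‖⁻¹ • invitPsi J σ vstar)).comp P)) vstar := by
    have hne : ‖invitPsi J σ vstar‖ ≠ 0 := norm_ne_zero_iff.mpr hx0ne
    have h7 := (hasDerivAt_inv hne).comp_hasFDerivAt vstar hnorm_d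
    simpa [Function.comp_def] using h7
  have hD := hinv_d.smul hψ
  have hTD : mvCLM (|lam - σ| •
        ((1 - Matrix.vecMulVec vstar vstar) * (J vstar - σ • 1)⁻¹)) =
      ‖invitPsi J σ vstar‖⁻¹ • P +
        ((-(‖invitPsi J σ vstar‖ ^ 2)⁻¹) •
          ((innerSL ℝ (‖invitPsi J σ vstar‖⁻¹ • invitPsi J σ vstar)).comp P)).smulRight
          (invitPsi J σ vstar) := by
    refine ContinuousLinearMap.ext fun h => ?_
    have hcabs : |lam - σ| = |c| := by rw [hcdef]
    rw [mvCLM_smul, mvCLM_mul, mvCLM_sub, mvCLM_one]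
    simp only [ContinuousLinearMap.smul_apply, ContinuousLinearMap.comp_apply,
      ContinuousLinearMap.sub_apply, ContinuousLinearMap.id_apply,
      ContinuousLinearMap.add_apply, ContinuousLinearMap.smulRight_apply, innerSL_apply_apply,
      mvCLM_vecMulVec]
    rw [← hPdef, hnx0, hcabs, hx0, inv_inv, smul_smul, real_inner_smul_left,
      real_inner_smul_left]
    rcases abs_cases c with ⟨h1, _⟩ | ⟨h1, _⟩ <;>
    · rw [h1]
      match_scalars <;> field_simp <;> ring
  rw [hTD]
  exact hD
end
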